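/- arXiv:1705.07610 — 2 statements merged into one kernel-verified Lean document; each statement's English description precedes it below -/
import Mathlib

section
/- Let k be a field, Ψ a finite-dimensional k-vector space, and for i = 1,…,n let u_i : Ψ → Φ_i and v_i : Φ_i → Ψ be linear maps with T_i := 1 - v_i u_i. Define the block n×n matrix S_β with (i,j) block equal to the identity on Φ_i if i = j, equal to u_i v_j : Φ_j → Φ_i if i < j, and 0 if i > j. Then S_β is invertible, and its inverse has (i,j) block equal to the identity if i = j, equal to -u_i T_{i+1} T_{i+2} ⋯ T_{j-1} v_j if i < j, and 0 if i > j. -/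
open scoped BigOperators

variable {k : Type*} [Field k] {n : ℕ} {Ψ : Type*}
  [AddCommGroup Ψ] [Module k Ψ] [FiniteDimensional k Ψ]
  {Φ : Fin n → Type*} [∀ i, AddCommGroup (Φ i)] [∀ i, Module k (Φ i)]
  [∀ i, FiniteDimensional k (Φ i)]

/-- The ordered product (composition) of the endomorphisms `T l` for `l` running through the
finite set `s` in increasing order: for `s = {a₁ < a₂ < ⋯ < a_r}` this is `T a₁ ∘ T a₂ ∘ ⋯ ∘ T a_r`
(the identity if `s` is empty). -/
def orderedProd (T : Fin n → Module.End k Ψ) (s : Finset (Fin n)) : Module.End k Ψ :=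
  ((s.sort (· ≤ ·)).map T).prod

/-- The local monodromies `T_i := 1 - v_i u_i` of the quiver `(Ψ, Φ_i, u_i, v_i)`. -/
def quiverT (u : ∀ i, Ψ →ₗ[k] Φ i) (v : ∀ i, Φ i →ₗ[k] Ψ) (i : Fin n) : Module.End k Ψ :=
  1 - v i ∘ₗ u i

/-- The Stokes multiplier `S_β`: the block upper-unitriangular endomorphism of `⊕ᵢ Φᵢ` with
identity diagonal blocks and `(i,j)` block `u_i ∘ v_j` for `i < j`. -/
def Sbeta (u : ∀ i, Ψ →ₗ[k] Φ i) (v : ∀ i, Φ i →ₗ[k] Ψ) :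
    Module.End k (∀ i, Φ i) :=
  LinearMap.pi fun i =>
    (LinearMap.proj i : (∀ i, Φ i) →ₗ[k] Φ i) +
      ∑ j, if i < j then (u i ∘ₗ v j) ∘ₗ (LinearMap.proj j) else 0

/-- The block upper-unitriangular endomorphism of `⊕ᵢ Φᵢ` with identity diagonal blocks and
`(i,j)` block `-u_i T_{i+1} T_{i+2} ⋯ T_{j-1} v_j` for `i < j`. -/
def SbetaInv (u : ∀ i, Ψ →ₗ[k] Φ i) (v : ∀ i, Φ i →ₗ[k] Ψ) :
    Module.End k (∀ i, Φ i) :=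
  LinearMap.pi fun i =>
    (LinearMap.proj i : (∀ i, Φ i) →ₗ[k] Φ i) -
      ∑ j, if i < j then
        (u i ∘ₗ (orderedProd (quiverT u v) (Finset.Ioo i j) : Ψ →ₗ[k] Ψ) ∘ₗ v j) ∘ₗ
          (LinearMap.proj j : (∀ l, Φ l) →ₗ[k] Φ j)
      else 0


set_option linter.unusedSectionVars false

lemma orderedProd_empty (T : Fin n → Module.End k Ψ) : orderedProd T ∅ = 1 := by
  simp [orderedProd]

lemma orderedProd_insert_min (T : Fin n → Module.End k Ψ) {a : Fin n} {s : Finset (Fin n)}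
    (h : ∀ b ∈ s, a < b) : orderedProd T (insert a s) = T a * orderedProd T s := by
  have ha : a ∉ s := fun hm => lt_irrefl a (h a hm)
  unfold orderedProd
  rw [Finset.sort_insert (· ≤ ·) (fun b hb => (h b hb).le) ha, List.map_cons, List.prod_cons]

lemma orderedProd_insert_max (T : Fin n → Module.End k Ψ) {a : Fin n} {s : Finset (Fin n)}
    (h : ∀ b ∈ s, b < a) : orderedProd T (insert a s) = orderedProd T s * T a := by
  have ha : a ∉ s := fun hm => lt_irrefl a (h a hm)
  have hsort : (insert a s).sort (· ≤ ·) = s.sort (· ≤ ·) ++ [a] := by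
    apply fun p s1 s2 => List.Perm.eq_of_pairwise' (r := (· ≤ · : Fin n → Fin n → Prop)) s1 s2 p
    · refine ((Finset.sort_perm_toList _ _)).trans ?_
      refine List.Perm.trans ?_ (List.perm_append_singleton a (s.sort (· ≤ ·))).symm
      exact (Finset.toList_insert ha).trans
        (List.Perm.cons a (Finset.sort_perm_toList _ _).symm)
    · exact Finset.pairwise_sort _ _
    · rw [List.pairwise_append]
      refine ⟨Finset.pairwise_sort _ _, List.pairwise_singleton _ a, ?_⟩
      intro b hb c hc
      rw [List.mem_singleton] at hc
      subst hc
      exact (h b ((Finset.mem_sort _).mp hb)).le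
  unfold orderedProd
  rw [hsort, List.map_append, List.prod_append, List.map_singleton, List.prod_singleton]

set_option linter.unusedSectionVars false

lemma key1 (T : Fin n → Module.End k Ψ) (i j : Fin n) :
    orderedProd T (Finset.Ioo i j) +
      ∑ l ∈ Finset.Ioo i j, (1 - T l) * orderedProd T (Finset.Ioo l j) = 1 := by
  suffices H : ∀ (m : ℕ) (i : Fin n), (Finset.Ioo i j).card = m →
      orderedProd T (Finset.Ioo i j) +
        ∑ l ∈ Finset.Ioo i j, (1 - T l) * orderedProd T (Finset.Ioo l j) = 1 from
    H _ i rfl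
  intro m
  induction m using Nat.strong_induction_on with
  | _ m ih =>
    intro i hm
    rcases Finset.eq_empty_or_nonempty (Finset.Ioo i j) with he | hne
    · simp [he, orderedProd_empty]
    · set a := (Finset.Ioo i j).min' hne with ha
      have hamem : a ∈ Finset.Ioo i j := Finset.min'_mem _ hne
      obtain ⟨hia, haj⟩ := Finset.mem_Ioo.mp hamem
      have hset : Finset.Ioo i j = insert a (Finset.Ioo a j) := by
        ext x
        simp only [Finset.mem_Ioo, Finset.mem_insert]
        constructor
        · rintro ⟨hix, hxj⟩
          rcases eq_or_ne x a with h | h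
          · exact Or.inl h
          · exact Or.inr ⟨lt_of_le_of_ne (Finset.min'_le _ x (Finset.mem_Ioo.mpr ⟨hix, hxj⟩))
              (Ne.symm h), hxj⟩
        · rintro (rfl | ⟨hax, hxj⟩)
          · exact ⟨hia, haj⟩
          · exact ⟨hia.trans hax, hxj⟩
      have hanot : a ∉ Finset.Ioo a j := by simp
      have hmin : ∀ b ∈ Finset.Ioo a j, a < b := fun b hb => (Finset.mem_Ioo.mp hb).1
      have hcard : (Finset.Ioo a j).card < m := by
        rw [← hm, hset, Finset.card_insert_of_notMem hanot]; omega
      have IH := ih _ hcard a rfl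
      rw [hset, orderedProd_insert_min T hmin, Finset.sum_insert hanot]
      have h1 : (1 - T a) * orderedProd T (Finset.Ioo a j) =
          orderedProd T (Finset.Ioo a j) - T a * orderedProd T (Finset.Ioo a j) := by
        rw [sub_mul, one_mul]
      rw [h1]
      abel_nf
      abel_nf at IH
      linear_combination (norm := abel) IH

lemma key2 (T : Fin n → Module.End k Ψ) (i j : Fin n) :
    orderedProd T (Finset.Ioo i j) +
      ∑ l ∈ Finset.Ioo i j, orderedProd T (Finset.Ioo i l) * (1 - T l) = 1 := by
  suffices H : ∀ (m : ℕ) (j : Fin n), (Finset.Ioo i j).card = m →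
      orderedProd T (Finset.Ioo i j) +
        ∑ l ∈ Finset.Ioo i j, orderedProd T (Finset.Ioo i l) * (1 - T l) = 1 from
    H _ j rfl
  intro m
  induction m using Nat.strong_induction_on with
  | _ m ih =>
    intro j hm
    rcases Finset.eq_empty_or_nonempty (Finset.Ioo i j) with he | hne
    · simp [he, orderedProd_empty]
    · set a := (Finset.Ioo i j).max' hne with ha
      have hamem : a ∈ Finset.Ioo i j := Finset.max'_mem _ hne
      obtain ⟨hia, haj⟩ := Finset.mem_Ioo.mp hamem
      have hset : Finset.Ioo i j = insert a (Finset.Ioo i a) := by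
        ext x
        simp only [Finset.mem_Ioo, Finset.mem_insert]
        constructor
        · rintro ⟨hix, hxj⟩
          rcases eq_or_ne x a with h | h
          · exact Or.inl h
          · exact Or.inr ⟨hix, lt_of_le_of_ne (Finset.le_max' _ x (Finset.mem_Ioo.mpr ⟨hix, hxj⟩)) h⟩
        · rintro (rfl | ⟨hax, hxj⟩)
          · exact ⟨hia, haj⟩
          · exact ⟨hax, hxj.trans haj⟩
      have hanot : a ∉ Finset.Ioo i a := by simp
      have hmax : ∀ b ∈ Finset.Ioo i a, b < a := fun b hb => (Finset.mem_Ioo.mp hb).2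
      have hcard : (Finset.Ioo i a).card < m := by
        rw [← hm, hset, Finset.card_insert_of_notMem hanot]; omega
      have IH := ih _ hcard a rfl
      rw [hset, orderedProd_insert_max T hmax, Finset.sum_insert hanot]
      have h1 : orderedProd T (Finset.Ioo i a) * (1 - T a) =
          orderedProd T (Finset.Ioo i a) - orderedProd T (Finset.Ioo i a) * T a := by
        rw [mul_sub, mul_one]
      rw [h1]
      abel_nf
      abel_nf at IH
      linear_combination (norm := abel) IH

lemma ite_lm_apply {M N : Type*} [AddCommGroup M] [Module k M] [AddCommGroup N] [Module k N]
    (c : Prop) [Decidable c] (f : M →ₗ[k] N) (y : M) :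
    (if c then f else 0) y = if c then f y else 0 := by
  split <;> simp

lemma ite_sub_dist {M : Type*} [AddCommGroup M] (c : Prop) [Decidable c] (a b : M) :
    (if c then a - b else 0) = (if c then a else 0) - (if c then b else 0) := by
  split <;> simp

lemma ite_add_dist {M : Type*} [AddCommGroup M] (c : Prop) [Decidable c] (a b : M) :
    (if c then a + b else 0) = (if c then a else 0) + (if c then b else 0) := by
  split <;> simp

lemma ite_sum_dist {M α : Type*} [AddCommGroup M] (c : Prop) [Decidable c] (s : Finset α)
    (f : α → M) : (if c then ∑ j ∈ s, f j else 0) = ∑ j ∈ s, if c then f j else 0 := by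
  split <;> simp

lemma filter_Ioo (i j : Fin n) :
    Finset.univ.filter (fun l => i < l ∧ l < j) = Finset.Ioo i j := by
  ext l; simp [Finset.mem_Ioo]

lemma sum_ite_Ioo {M : Type*} [AddCommGroup M] (i j : Fin n) (f : Fin n → M) :
    (∑ l : Fin n, if i < l ∧ l < j then f l else 0) = ∑ l ∈ Finset.Ioo i j, f l := by
  rw [← filter_Ioo i j, Finset.sum_filter]

/-- The block matrix `S_β`, with identity diagonal blocks, `(i,j)` block `u_i v_j` for `i < j`
and `0` below the diagonal, is invertible, and its inverse is the block upper-unitriangular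
matrix whose `(i,j)` block for `i < j` is `-u_i T_{i+1} T_{i+2} ⋯ T_{j-1} v_j`,
where `T_l = 1 - v_l u_l`. -/
theorem stmt_1 (u : ∀ i, Ψ →ₗ[k] Φ i) (v : ∀ i, Φ i →ₗ[k] Ψ) :
    Sbeta u v * SbetaInv u v = 1 ∧ SbetaInv u v * Sbeta u v = 1 := by
  set P : Fin n → Fin n → Module.End k Ψ :=
    fun i j => orderedProd (quiverT u v) (Finset.Ioo i j) with hP
  constructor
  · apply LinearMap.ext
    intro x
    funext i
    simp only [Module.End.mul_apply, Module.End.one_apply, Sbeta, SbetaInv, LinearMap.pi_apply,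
      LinearMap.add_apply, LinearMap.sub_apply, LinearMap.sum_apply, LinearMap.coe_comp,
      Function.comp_apply, LinearMap.proj_apply, ite_lm_apply, LinearMap.zero_apply, ← hP]
    have claim : ∀ j : Fin n,
        (if i < j then u i (v j (x j)) else 0) =
          (if i < j then u i (P i j (v j (x j))) else 0) +
            ∑ l ∈ Finset.Ioo i j, u i (v l (u l (P l j (v j (x j))))) := by
      intro j
      by_cases h : i < j
      · simp only [if_pos h]
        set y := v j (x j)
        have hk := key1 (quiverT u v) i j
        have hy := DFunLike.congr_fun hk y
        simp only [LinearMap.add_apply, LinearMap.sum_apply, Module.End.one_apply,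
          Module.End.mul_apply, LinearMap.sub_apply, quiverT, LinearMap.coe_comp,
          Function.comp_apply, sub_sub_cancel, ← hP] at hy
        conv_lhs => rw [← hy]
        rw [map_add, map_sum]
      · simp [h, Finset.Ioo_eq_empty h]
    calc (x i - ∑ j : Fin n, if i < j then u i (P i j (v j (x j))) else 0) +
        (∑ l : Fin n, if i < l then
            u i (v l (x l - ∑ j : Fin n, if l < j then u l (P l j (v j (x j))) else 0)) else 0)
        = (x i - ∑ j : Fin n, if i < j then u i (P i j (v j (x j))) else 0) +
          ((∑ l : Fin n, if i < l then u i (v l (x l)) else 0) -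
            ∑ j : Fin n, ∑ l ∈ Finset.Ioo i j, u i (v l (u l (P l j (v j (x j)))))) := by
          congr 1
          have hswap : ∀ l : Fin n,
              (if i < l then
                u i (v l (x l - ∑ j : Fin n, if l < j then u l (P l j (v j (x j))) else 0))
                else 0) =
              (if i < l then u i (v l (x l)) else 0) -
                ∑ j : Fin n, if i < l ∧ l < j then u i (v l (u l (P l j (v j (x j))))) else 0 := by
            intro l
            rw [map_sub, map_sub, map_sum, map_sum, ite_sub_dist, ite_sum_dist]
            congr 1
            refine Finset.sum_congr rfl fun j _ => ?_
            rw [ite_and, apply_ite (v l), apply_ite (u i), map_zero, map_zero]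
          calc _ = ∑ l : Fin n, ((if i < l then u i (v l (x l)) else 0) -
                ∑ j : Fin n, if i < l ∧ l < j then u i (v l (u l (P l j (v j (x j))))) else 0) :=
              Finset.sum_congr rfl fun l _ => hswap l
            _ = (∑ l : Fin n, if i < l then u i (v l (x l)) else 0) -
                ∑ l : Fin n, ∑ j : Fin n,
                  if i < l ∧ l < j then u i (v l (u l (P l j (v j (x j))))) else 0 :=
              Finset.sum_sub_distrib _ _
            _ = (∑ l : Fin n, if i < l then u i (v l (x l)) else 0) -
                ∑ j : Fin n, ∑ l : Fin n,
                  if i < l ∧ l < j then u i (v l (u l (P l j (v j (x j))))) else 0 := by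
              rw [Finset.sum_comm]
            _ = (∑ l : Fin n, if i < l then u i (v l (x l)) else 0) -
                ∑ j : Fin n, ∑ l ∈ Finset.Ioo i j, u i (v l (u l (P l j (v j (x j))))) := by
              congr 1
              exact Finset.sum_congr rfl fun j _ => sum_ite_Ioo i j _
        _ = x i := by
          rw [Finset.sum_congr rfl fun j _ => claim j, Finset.sum_add_distrib]
          abel
  · apply LinearMap.ext
    intro x
    funext i
    simp only [Module.End.mul_apply, Module.End.one_apply, Sbeta, SbetaInv, LinearMap.pi_apply,
      LinearMap.add_apply, LinearMap.sub_apply, LinearMap.sum_apply, LinearMap.coe_comp,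
      Function.comp_apply, LinearMap.proj_apply, ite_lm_apply, LinearMap.zero_apply, ← hP]
    have claim : ∀ l : Fin n,
        (if i < l then u i (v l (x l)) else 0) =
          (if i < l then u i (P i l (v l (x l))) else 0) +
            ∑ j ∈ Finset.Ioo i l, u i (P i j (v j (u j (v l (x l))))) := by
      intro l
      by_cases h : i < l
      · simp only [if_pos h]
        set y := v l (x l)
        have hk := key2 (quiverT u v) i l
        have hy := DFunLike.congr_fun hk y
        simp only [LinearMap.add_apply, LinearMap.sum_apply, Module.End.one_apply,
          Module.End.mul_apply, LinearMap.sub_apply, quiverT, LinearMap.coe_comp,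
          Function.comp_apply, sub_sub_cancel, ← hP] at hy
        conv_lhs => rw [← hy]
        rw [map_add, map_sum]
      · simp [h, Finset.Ioo_eq_empty h]
    calc (x i + ∑ l : Fin n, if i < l then u i (v l (x l)) else 0) -
        (∑ j : Fin n, if i < j then
            u i (P i j (v j (x j + ∑ l : Fin n, if j < l then u j (v l (x l)) else 0))) else 0)
        = (x i + ∑ l : Fin n, if i < l then u i (v l (x l)) else 0) -
          ((∑ j : Fin n, if i < j then u i (P i j (v j (x j))) else 0) +
            ∑ l : Fin n, ∑ j ∈ Finset.Ioo i l, u i (P i j (v j (u j (v l (x l)))))) := by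
          congr 1
          have hswap : ∀ j : Fin n,
              (if i < j then
                u i (P i j (v j (x j + ∑ l : Fin n, if j < l then u j (v l (x l)) else 0)))
                else 0) =
              (if i < j then u i (P i j (v j (x j))) else 0) +
                ∑ l : Fin n, if i < j ∧ j < l then u i (P i j (v j (u j (v l (x l))))) else 0 := by
            intro j
            rw [map_add, map_add, map_add, map_sum, map_sum, map_sum, ite_add_dist, ite_sum_dist]
            congr 1
            refine Finset.sum_congr rfl fun l _ => ?_
            rw [ite_and, apply_ite (v j), apply_ite (P i j), apply_ite (u i),
              map_zero, map_zero, map_zero]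
          calc _ = ∑ j : Fin n, ((if i < j then u i (P i j (v j (x j))) else 0) +
                ∑ l : Fin n, if i < j ∧ j < l then u i (P i j (v j (u j (v l (x l))))) else 0) :=
              Finset.sum_congr rfl fun j _ => hswap j
            _ = (∑ j : Fin n, if i < j then u i (P i j (v j (x j))) else 0) +
                ∑ j : Fin n, ∑ l : Fin n,
                  if i < j ∧ j < l then u i (P i j (v j (u j (v l (x l))))) else 0 :=
              Finset.sum_add_distrib
            _ = (∑ j : Fin n, if i < j then u i (P i j (v j (x j))) else 0) +
                ∑ l : Fin n, ∑ j : Fin n,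
                  if i < j ∧ j < l then u i (P i j (v j (u j (v l (x l))))) else 0 := by
              rw [Finset.sum_comm]
            _ = (∑ j : Fin n, if i < j then u i (P i j (v j (x j))) else 0) +
                ∑ l : Fin n, ∑ j ∈ Finset.Ioo i l, u i (P i j (v j (u j (v l (x l))))) := by
              congr 1
              exact Finset.sum_congr rfl fun l _ => sum_ite_Ioo i l _
        _ = x i := by
          rw [Finset.sum_congr rfl fun l _ => claim l, Finset.sum_add_distrib]
          abel
end

section
/- Localized-case Stokes matrices: let T_1, …, T_n be invertible endomorphisms of a finite-dimensional k-vector space Ψ, and set u_i := id_Ψ, v_i := 1 - T_i. Then the Stokes matrices of the theorem become S_β with (i,j) entry 1 for i = j, 1 - T_j for i < j, 0 for i > j, and S_{-β} with (i,j) entry T_i for i = j, T_j - 1 for i > j, 0 for i < j; and one has S_β^{-1} S_{-β} = 1 - U_Σ V_Σ where (U_Σ V_Σ)_{ij} = T_{i+1} T_{i+2} ⋯ T_n (1 - T_j). -/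
open scoped BigOperators

variable {k : Type*} [Field k] {n : ℕ} {Ψ : Type*}
  [AddCommGroup Ψ] [Module k Ψ] [FiniteDimensional k Ψ]

lemma orderedProd_key (T : Fin n → Module.End k Ψ) (s : Finset (Fin n)) :
    orderedProd T s + ∑ l ∈ s, (1 - T l) * orderedProd T (s ∩ Finset.Ioi l) = 1 := by
  induction s using Finset.induction_on_min with
  | empty => simp [orderedProd]
  | insert a s ha ih =>
      have ha' : a ∉ s := fun h => lt_irrefl a (ha a h)
      have hsort : (insert a s).sort (· ≤ ·) = a :: s.sort (· ≤ ·) :=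
        Finset.sort_insert _ (fun b hb => (ha b hb).le) ha'
      have hins : orderedProd T (insert a s) = T a * orderedProd T s := by
        rw [orderedProd, hsort]; simp [orderedProd]
      have hcap : insert a s ∩ Finset.Ioi a = s := by
        ext x
        simp only [Finset.mem_inter, Finset.mem_insert, Finset.mem_Ioi]
        constructor
        · rintro ⟨h1 | h1, h2⟩
          · subst h1; exact absurd h2 (lt_irrefl x)
          · exact h1
        · exact fun h => ⟨Or.inr h, ha x h⟩
      rw [Finset.sum_insert ha', hcap, hins]
      have hcap2 : ∀ l ∈ s, insert a s ∩ Finset.Ioi l = s ∩ Finset.Ioi l := by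
        intro l hl
        ext x
        simp only [Finset.mem_inter, Finset.mem_insert, Finset.mem_Ioi]
        constructor
        · rintro ⟨h1 | h1, h2⟩
          · exact absurd (h2.trans_le le_rfl) (by rw [h1] at h2; exact absurd h2 (not_lt.2 (ha l hl).le))
          · exact ⟨h1, h2⟩
        · exact fun ⟨h1, h2⟩ => ⟨Or.inr h1, h2⟩
      rw [Finset.sum_congr rfl (fun l hl => by rw [hcap2 l hl])]
      have : T a * orderedProd T s + ((1 - T a) * orderedProd T s +
          ∑ l ∈ s, (1 - T l) * orderedProd T (s ∩ Finset.Ioi l)) =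
          orderedProd T s + ∑ l ∈ s, (1 - T l) * orderedProd T (s ∩ Finset.Ioi l) := by
        rw [sub_mul, one_mul]; abel
      rw [this, ih]

lemma strictUpper_pow_eq_zero {R : Type*} [Ring R] (M : Matrix (Fin n) (Fin n) R)
    (hM : ∀ i j : Fin n, ¬ i < j → M i j = 0) :
    M ^ n = 0 := by
  have key : ∀ m : ℕ, ∀ i j : Fin n, (j : ℕ) < (i : ℕ) + m → (M ^ m) i j = 0 := by
    intro m
    induction m with
    | zero =>
        intro i j hj
        simp only [pow_zero, Matrix.one_apply]
        rw [if_neg]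
        rintro rfl; omega
    | succ m ih =>
        intro i j hj
        rw [pow_succ', Matrix.mul_apply]
        apply Finset.sum_eq_zero
        intro l _
        by_cases hl : i < l
        · rw [ih l j (by have := hl; omega), mul_zero]
        · rw [hM i l hl, zero_mul]
  ext i j
  exact (key n i j (by omega)).trans rfl

/-- Localized-case Stokes matrices: for invertible `T_1, …, T_n ∈ End(Ψ)` (and `u_i = id`,
`v_i = 1 - T_i`), the matrix `S_β` with `(i,j)` entry `1` for `i = j`, `1 - T_j` for `i < j`
and `0` for `i > j`, and the matrix `S_{-β}` with `(i,j)` entry `T_i` for `i = j`,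
`T_j - 1` for `i > j` and `0` for `i < j`, satisfy: `S_β` is invertible and
`S_β⁻¹ S_{-β} = 1 - U_Σ V_Σ`, where `(U_Σ V_Σ)_{ij} = T_{i+1} T_{i+2} ⋯ T_n (1 - T_j)`. -/
theorem stmt_7 (T : Fin n → Module.End k Ψ) (hT : ∀ i, IsUnit (T i))
    (Sβ Sm UV : Matrix (Fin n) (Fin n) (Module.End k Ψ))
    (hSβ : Sβ = Matrix.of fun i j => if i = j then 1 else if i < j then 1 - T j else 0)
    (hSm : Sm = Matrix.of fun i j => if i = j then T i else if j < i then T j - 1 else 0)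
    (hUV : UV = Matrix.of fun i j => orderedProd T (Finset.Ioi i) * (1 - T j)) :
    IsUnit Sβ ∧ Ring.inverse Sβ * Sm = 1 - UV := by
  -- Sβ = 1 + N, N strictly upper triangular
  have hunit : IsUnit Sβ := by
    have hN : Sβ = 1 + Matrix.of (fun i j : Fin n =>
        if i < j then (1 - T j : Module.End k Ψ) else 0) := by
      rw [hSβ]
      ext i j
      by_cases h : i = j
      · subst h; simp [Matrix.one_apply]
      · simp [Matrix.one_apply, h]
    rw [hN]
    exact IsNilpotent.isUnit_one_add ⟨n, strictUpper_pow_eq_zero _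
      (fun i j h => by simp [Matrix.of_apply, h])⟩
  refine ⟨hunit, ?_⟩
  have hkey : Sβ * (1 - UV) = Sm := by
    ext i j : 2
    have hrow : ∑ l, Sβ i l * (orderedProd T (Finset.Ioi l)) = 1 := by
      have hsub : ∀ l ∈ Finset.Ioi i, Finset.Ioi i ∩ Finset.Ioi l = Finset.Ioi l := fun l hl =>
        Finset.inter_eq_right.mpr (Finset.Ioi_subset_Ioi (Finset.mem_Ioi.mp hl).le)
      have key := orderedProd_key T (Finset.Ioi i)
      rw [Finset.sum_congr rfl fun l hl => by rw [hsub l hl]] at key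
      calc ∑ l, Sβ i l * orderedProd T (Finset.Ioi l)
          = ∑ l ∈ Finset.Ici i, Sβ i l * orderedProd T (Finset.Ioi l) := by
            refine (Finset.sum_subset (Finset.Ici i).subset_univ ?_).symm
            intro l _ hl
            simp only [Finset.mem_Ici, not_le] at hl
            rw [hSβ, Matrix.of_apply, if_neg (ne_of_gt hl), if_neg (not_lt_of_gt hl), zero_mul]
        _ = orderedProd T (Finset.Ioi i) +
              ∑ l ∈ Finset.Ioi i, (1 - T l) * orderedProd T (Finset.Ioi l) := by
            rw [← Finset.Ioi_insert, Finset.sum_insert (by simp), hSβ]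
            simp only [Matrix.of_apply, if_pos rfl, one_mul]
            congr 1
            refine Finset.sum_congr rfl fun l hl => ?_
            rw [if_neg (ne_of_lt (Finset.mem_Ioi.mp hl)), if_pos (Finset.mem_Ioi.mp hl)]
        _ = 1 := key
    have hUVrow : (Sβ * UV) i j = 1 - T j := by
      rw [Matrix.mul_apply]
      calc ∑ l, Sβ i l * UV l j
          = (∑ l, Sβ i l * orderedProd T (Finset.Ioi l)) * (1 - T j) := by
            rw [Finset.sum_mul]
            exact Finset.sum_congr rfl (fun l _ => by rw [hUV, Matrix.of_apply, mul_assoc])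
        _ = 1 - T j := by rw [hrow, one_mul]
    rw [Matrix.mul_sub, Matrix.mul_one, Matrix.sub_apply, hUVrow, hSm, hSβ]
    simp only [Matrix.of_apply]
    by_cases h : i = j
    · subst h; simp
    · by_cases h2 : i < j
      · rw [if_neg h, if_pos h2, if_neg h, if_neg (not_lt_of_gt h2), sub_self]
      · rw [if_neg h, if_neg h2, if_neg h, if_pos (lt_of_le_of_ne (not_lt.mp h2) (Ne.symm h)),
          zero_sub, neg_sub]
  rw [← hkey, ← mul_assoc, Ring.inverse_mul_cancel _ hunit, one_mul]
end
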